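/- Let F be a field of characteristic not 2 or 3, let k ∈ F be nonzero, and let K = F[z]/(z² − k) with norm N = Algebra.norm from K to F. Let f be an integer-matrix binary cubic form over F with reduced discriminant 4k. Then the stabilizer of f in SL₂(F) (under the action by linear change of variable) is isomorphic as a group to (Res_F^K μ₃)_{N=1} = { x ∈ K^× : x³ = 1 and N(x) = 1 }, the group of cube roots of unity in K of norm 1. -/

import Mathlib

/-!
STATEMENT 6: Let F be a field of characteristic not 2 or 3, k ∈ F nonzero, and
K = F[z]/(z² − k) with norm N = Algebra.norm.  For any integer-matrix binary cubic form
f over F with reduced discriminant 4k, the stabilizer of f in SL₂(F) (acting by linear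
change of variable) is isomorphic as a group to
(Res_F^K μ₃)_{N=1} = { x ∈ K^× : x³ = 1 and N(x) = 1 }.
-/

open Matrix MatrixGroups

/-- An (integer-matrix) binary cubic form over `R`: the quadruple `(a,b,c,d)` stands for
`f(x,y) = a·x³ + 3b·x²y + 3c·xy² + d·y³`. -/
abbrev BCF (R : Type*) := R × R × R × R

/-- The reduced discriminant `disc(f) = a²d² − 3b²c² − 6abcd + 4ac³ + 4b³d` of the
integer-matrix binary cubic form `(a,b,c,d)`. -/
def bcfDisc {R : Type*} [CommRing R] (f : BCF R) : R :=
  f.1 ^ 2 * f.2.2.2 ^ 2 - 3 * f.2.1 ^ 2 * f.2.2.1 ^ 2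
    - 6 * f.1 * f.2.1 * f.2.2.1 * f.2.2.2 + 4 * f.1 * f.2.2.1 ^ 3 + 4 * f.2.1 ^ 3 * f.2.2.2

/-- The value `f(x,y)` of the integer-matrix binary cubic form `f = (a,b,c,d)`. -/
def bcfVal {R : Type*} [CommRing R] (f : BCF R) (x y : R) : R :=
  f.1 * x ^ 3 + 3 * f.2.1 * x ^ 2 * y + 3 * f.2.2.1 * x * y ^ 2 + f.2.2.2 * y ^ 3

/-- The action of a 2×2 matrix `γ = ((p,q),(r,s))` on integer-matrix binary cubic forms
by linear change of variable, `(γ·f)(x,y) = f(px+qy, rx+sy)`, written in coordinates. -/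
def bcfAct {R : Type*} [CommRing R] (γ : Matrix (Fin 2) (Fin 2) R) (f : BCF R) : BCF R :=
  (f.1 * γ 0 0 ^ 3 + 3 * f.2.1 * γ 0 0 ^ 2 * γ 1 0 + 3 * f.2.2.1 * γ 0 0 * γ 1 0 ^ 2
     + f.2.2.2 * γ 1 0 ^ 3,
   f.1 * γ 0 0 ^ 2 * γ 0 1 + f.2.1 * (γ 0 0 ^ 2 * γ 1 1 + 2 * γ 0 0 * γ 0 1 * γ 1 0)
     + f.2.2.1 * (2 * γ 0 0 * γ 1 0 * γ 1 1 + γ 0 1 * γ 1 0 ^ 2) + f.2.2.2 * γ 1 0 ^ 2 * γ 1 1,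
   f.1 * γ 0 0 * γ 0 1 ^ 2 + f.2.1 * (2 * γ 0 0 * γ 0 1 * γ 1 1 + γ 0 1 ^ 2 * γ 1 0)
     + f.2.2.1 * (γ 0 0 * γ 1 1 ^ 2 + 2 * γ 0 1 * γ 1 0 * γ 1 1) + f.2.2.2 * γ 1 0 * γ 1 1 ^ 2,
   f.1 * γ 0 1 ^ 3 + 3 * f.2.1 * γ 0 1 ^ 2 * γ 1 1 + 3 * f.2.2.1 * γ 0 1 * γ 1 1 ^ 2
     + f.2.2.2 * γ 1 1 ^ 3)

/-- The action is by substitution: `(γ·f)(x,y) = f(px+qy, rx+sy)`. -/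
theorem bcfAct_val {R : Type*} [CommRing R] (γ : Matrix (Fin 2) (Fin 2) R) (f : BCF R)
    (x y : R) : bcfVal (bcfAct γ f) x y
      = bcfVal f (γ 0 0 * x + γ 0 1 * y) (γ 1 0 * x + γ 1 1 * y) := by
  simp only [bcfAct, bcfVal]; ring

theorem bcfAct_one {R : Type*} [CommRing R] (f : BCF R) : bcfAct (1 : Matrix (Fin 2) (Fin 2) R) f = f := by
  obtain ⟨a, b, c, d⟩ := f
  simp [bcfAct, Matrix.one_apply]

theorem bcfAct_mul {R : Type*} [CommRing R] (g h : Matrix (Fin 2) (Fin 2) R) (f : BCF R) :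
    bcfAct (g * h) f = bcfAct h (bcfAct g f) := by
  obtain ⟨a, b, c, d⟩ := f
  simp only [bcfAct, Matrix.mul_apply, Fin.sum_univ_two, Prod.mk.injEq]
  refine ⟨by ring, by ring, by ring, by ring⟩

noncomputable section

open Polynomial

/-- The quadratic étale algebra `K = F[z]/(z² − k)`. -/
abbrev QuadAlg (F : Type*) [Field F] (k : F) : Type _ :=
  AdjoinRoot (Polynomial.X ^ 2 - Polynomial.C k : Polynomial F)

variable (F : Type*) [Field F] (k : F)

/-- The stabilizer of the binary cubic form `f` in `SL₂(F)`. -/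
def bcfStab (f : BCF F) : Subgroup (Matrix.SpecialLinearGroup (Fin 2) F) where
  carrier := {γ | bcfAct (γ : Matrix (Fin 2) (Fin 2) F) f = f}
  one_mem' := bcfAct_one f
  mul_mem' := by
    intro a b ha hb
    have : bcfAct ((a : Matrix (Fin 2) (Fin 2) F) * (b : Matrix (Fin 2) (Fin 2) F)) f = f := by
      rw [bcfAct_mul, ha, hb]
    simpa using this
  inv_mem' := by
    intro a ha
    have h := bcfAct_mul (a : Matrix (Fin 2) (Fin 2) F) ((a⁻¹ : _) : Matrix (Fin 2) (Fin 2) F) f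
    rw [Set.mem_setOf_eq] at ha
    rw [ha] at h
    have h2 : ((a : Matrix (Fin 2) (Fin 2) F) * ((a⁻¹ : _) : Matrix (Fin 2) (Fin 2) F)) = 1 := by
      rw [← Matrix.SpecialLinearGroup.coe_mul, mul_inv_cancel,
        Matrix.SpecialLinearGroup.coe_one]
    rw [h2, bcfAct_one] at h
    exact h.symm

/-- The group `(Res_F^K μ₃)_{N=1}` of cube roots of unity in `K` of norm 1, as a
subgroup of `K^×`. -/
def mu3NormOne : Subgroup (QuadAlg F k)ˣ where
  carrier := {x | x ^ 3 = 1 ∧ Algebra.norm F (x : QuadAlg F k) = 1}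
  one_mem' := ⟨one_pow 3, by simp⟩
  mul_mem' := by
    rintro a b ⟨ha1, ha2⟩ ⟨hb1, hb2⟩
    refine ⟨by rw [mul_pow, ha1, hb1, one_mul], ?_⟩
    rw [Units.val_mul, _root_.map_mul, ha2, hb2, one_mul]
  inv_mem' := by
    rintro a ⟨ha1, ha2⟩
    refine ⟨by rw [inv_pow, ha1, inv_one], ?_⟩
    have h := congrArg (Algebra.norm F) a.mul_inv
    rw [_root_.map_mul, _root_.map_one, ha2, one_mul] at h
    exact h

namespace Six
variable {F : Type*} [Field F]

lemma quad_monic (k : F) : (X ^ 2 - C k).Monic := monic_X_pow_sub_C k two_ne_zero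

lemma quad_deg (k : F) : (X ^ 2 - C k : F[X]).degree = 2 := degree_X_pow_sub_C (by norm_num) k

-- abbreviations
noncomputable abbrev og (k : F) : F →+* QuadAlg F k := AdjoinRoot.of _
noncomputable abbrev rt (k : F) : QuadAlg F k := AdjoinRoot.root _

lemma rt_sq (k : F) : (rt k) ^ 2 = og k k := by
  have h := AdjoinRoot.mk_self (f := (X ^ 2 - C k : F[X]))
  rw [_root_.map_sub, _root_.map_pow, AdjoinRoot.mk_X, AdjoinRoot.mk_C, sub_eq_zero] at h
  exact h

lemma exists_rep (k : F) (x : QuadAlg F k) : ∃ u v : F, x = og k u + og k v * rt k := by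
  obtain ⟨P, rfl⟩ := AdjoinRoot.mk_surjective (g := (X ^ 2 - C k : F[X])) x
  refine ⟨(P %ₘ (X ^ 2 - C k)).coeff 0, (P %ₘ (X ^ 2 - C k)).coeff 1, ?_⟩
  conv_lhs => rw [← modByMonic_add_div P (X ^ 2 - C k)]
  have hdeg : (P %ₘ (X ^ 2 - C k)).degree ≤ 1 := by
    have := degree_modByMonic_lt P (quad_monic k)
    rw [quad_deg] at this
    exact Order.le_of_lt_succ (by exact_mod_cast this)
  rw [_root_.map_add, _root_.map_mul, AdjoinRoot.mk_self, zero_mul, add_zero]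
  conv_lhs => rw [eq_X_add_C_of_degree_le_one hdeg]
  rw [_root_.map_add, _root_.map_mul, AdjoinRoot.mk_X, AdjoinRoot.mk_C, AdjoinRoot.mk_C]
  rw [add_comm]

lemma rep_zero (k : F) (u v : F) (h : og k u + og k v * rt k = 0) : u = 0 ∧ v = 0 := by
  have h' : (AdjoinRoot.mk (X ^ 2 - C k : F[X])) (C v * X + C u) = 0 := by
    rw [_root_.map_add, _root_.map_mul, AdjoinRoot.mk_X, AdjoinRoot.mk_C, AdjoinRoot.mk_C]
    rw [← h]; unfold og rt; ring
  rw [AdjoinRoot.mk_eq_zero] at h'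
  have hz : (C v * X + C u : F[X]) = 0 := by
    refine eq_zero_of_dvd_of_degree_lt h' ?_
    rw [quad_deg]
    calc (C v * X + C u : F[X]).degree ≤ max (C v * X).degree (C u).degree := degree_add_le _ _
    _ ≤ max 1 0 := max_le_max (degree_C_mul_X_le v) degree_C_le
    _ < 2 := by norm_num
  constructor
  · have := congrArg (fun p => Polynomial.coeff p 0) hz
    simpa using this
  · have := congrArg (fun p => Polynomial.coeff p 1) hz
    simpa using this

lemma rep_unique (k : F) (u v u' v' : F) (h : og k u + og k v * rt k = og k u' + og k v' * rt k) :
    u = u' ∧ v = v' := by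
  have : og k (u - u') + og k (v - v') * rt k = 0 := by
    rw [_root_.map_sub, _root_.map_sub]; rw [← sub_eq_zero] at h; rw [← h]; ring
  obtain ⟨h1, h2⟩ := rep_zero k _ _ this
  exact ⟨sub_eq_zero.mp h1, sub_eq_zero.mp h2⟩

lemma sixteen_ne (h2 : (2:F) ≠ 0) : (16:F) ≠ 0 := by
  have := pow_ne_zero 4 h2; norm_num at this; exact this

lemma four_ne (h2 : (2:F) ≠ 0) : (4:F) ≠ 0 := by
  have := pow_ne_zero 2 h2; norm_num at this; exact this

lemma eight_ne (h2 : (2:F) ≠ 0) : (8:F) ≠ 0 := by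
  have := pow_ne_zero 3 h2; norm_num at this; exact this

end Six
namespace Six
variable {F : Type*} [Field F]

lemma quad_li (k : F) : LinearIndependent F ![(1 : QuadAlg F k), rt k] := by
  rw [LinearIndependent.pair_iff]
  intro s t h
  have h' : og k s + og k t * rt k = 0 := by
    rw [← h, Algebra.smul_def, Algebra.smul_def, mul_one, AdjoinRoot.algebraMap_eq]
  exact rep_zero k s t h'

lemma quad_span (k : F) :
    ⊤ ≤ Submodule.span F (Set.range ![(1 : QuadAlg F k), rt k]) := by
  intro x _
  obtain ⟨u, v, rfl⟩ := exists_rep k x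
  have h1 : (1 : QuadAlg F k) ∈ Set.range ![(1 : QuadAlg F k), rt k] := ⟨0, rfl⟩
  have hr : rt k ∈ Set.range ![(1 : QuadAlg F k), rt k] := ⟨1, rfl⟩
  have : og k u + og k v * rt k = u • (1 : QuadAlg F k) + v • rt k := by
    rw [Algebra.smul_def, Algebra.smul_def, mul_one, AdjoinRoot.algebraMap_eq]
  rw [this]
  exact Submodule.add_mem _
    (Submodule.smul_mem _ _ (Submodule.subset_span h1))
    (Submodule.smul_mem _ _ (Submodule.subset_span hr))

noncomputable def quadBasis (k : F) : Module.Basis (Fin 2) F (QuadAlg F k) :=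
  Module.Basis.mk (quad_li k) (quad_span k)

lemma quadBasis_zero (k : F) : quadBasis k 0 = 1 := by
  rw [quadBasis, Module.Basis.mk_apply]; rfl

lemma quadBasis_one (k : F) : quadBasis k 1 = rt k := by
  rw [quadBasis, Module.Basis.mk_apply]; rfl

lemma repr_combo (k : F) (c0 c1 : F) (i : Fin 2) :
    (quadBasis k).repr (c0 • quadBasis k 0 + c1 • quadBasis k 1) i
      = if i = 0 then c0 else c1 := by
  rw [_root_.map_add, _root_.map_smul, _root_.map_smul, Module.Basis.repr_self, Module.Basis.repr_self]
  fin_cases i <;> simp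

lemma norm_rep (k : F) (u v : F) :
    Algebra.norm F (og k u + og k v * rt k) = u ^ 2 - k * v ^ 2 := by
  rw [Algebra.norm_eq_matrix_det (quadBasis k), Matrix.det_fin_two]
  have e0 : (og k u + og k v * rt k) * quadBasis k 0
      = u • quadBasis k 0 + v • quadBasis k 1 := by
    rw [quadBasis_zero, quadBasis_one, mul_one, Algebra.smul_def, Algebra.smul_def, mul_one,
      AdjoinRoot.algebraMap_eq]
  have e1 : (og k u + og k v * rt k) * quadBasis k 1
      = (k * v) • quadBasis k 0 + u • quadBasis k 1 := by
    rw [quadBasis_zero, quadBasis_one, Algebra.smul_def, Algebra.smul_def, mul_one,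
      AdjoinRoot.algebraMap_eq]
    have h2 : rt k * rt k = og k k := by rw [← pow_two]; exact rt_sq k
    have : og k u + og k v * rt k = og k v * rt k + og k u := by ring
    rw [this, add_mul, mul_assoc, h2, ← _root_.map_mul, mul_comm v k]
  rw [Algebra.leftMulMatrix_eq_repr_mul, Algebra.leftMulMatrix_eq_repr_mul,
    Algebra.leftMulMatrix_eq_repr_mul, Algebra.leftMulMatrix_eq_repr_mul, e0, e1,
    repr_combo, repr_combo, repr_combo, repr_combo]
  norm_num
  ring

lemma cube_rep (k : F) (u v : F) :
    (og k u + og k v * rt k) ^ 3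
      = og k (u ^ 3 + 3 * k * u * v ^ 2) + og k (3 * u ^ 2 * v + k * v ^ 3) * rt k := by
  have h2 := rt_sq k
  have expand : og k (u ^ 3 + 3 * k * u * v ^ 2)
      = (og k u) ^ 3 + 3 * og k k * og k u * (og k v) ^ 2 := by
    rw [_root_.map_add, _root_.map_pow, _root_.map_mul, _root_.map_mul, _root_.map_mul, _root_.map_pow, _root_.map_ofNat]
  have expand2 : og k (3 * u ^ 2 * v + k * v ^ 3)
      = 3 * (og k u) ^ 2 * og k v + og k k * (og k v) ^ 3 := by
    rw [_root_.map_add, _root_.map_mul, _root_.map_mul, _root_.map_pow, _root_.map_mul, _root_.map_pow, _root_.map_ofNat]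
  rw [expand, expand2]
  linear_combination (3 * og k u * (og k v) ^ 2 + (og k v) ^ 3 * rt k) * h2

end Six
namespace Six
variable {F : Type*} [Field F]

lemma mu3_class (k : F) (hk : k ≠ 0) (h2 : (2:F) ≠ 0) (x : (QuadAlg F k)ˣ)
    (hx : x ∈ mu3NormOne F k) :
    (x : QuadAlg F k) = 1 ∨
      ∃ w v : F, 2*w = -1 ∧ 4*(k*v^2) = -3 ∧ (x : QuadAlg F k) = og k w + og k v * rt k := by
  obtain ⟨hcube, hnorm⟩ := hx
  obtain ⟨u, v, hrep⟩ := exists_rep k (x : QuadAlg F k)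
  have hc : (x : QuadAlg F k) ^ 3 = 1 := by
    rw [← Units.val_pow_eq_pow_val, hcube, Units.val_one]
  rw [hrep, cube_rep] at hc
  have h1 : (1 : QuadAlg F k) = og k 1 + og k 0 * rt k := by simp
  rw [h1] at hc
  obtain ⟨e1, e2⟩ := rep_unique k _ _ _ _ hc
  rw [hrep, norm_rep] at hnorm
  have hkv : k * v ^ 2 = u ^ 2 - 1 := by linear_combination -hnorm
  have hcub : (u - 1) * (2 * u + 1) ^ 2 = 0 := by linear_combination e1 - 3 * u * hkv
  rcases mul_eq_zero.mp hcub with h | h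
  · left
    have hu : u = 1 := by linear_combination h
    have hv : v = 0 := by
      have : k * v ^ 2 = 0 := by rw [hkv, hu]; ring
      rcases mul_eq_zero.mp this with h' | h'
      · exact absurd h' hk
      · exact pow_eq_zero_iff (n := 2) (by norm_num) |>.mp h'
    rw [hrep, hu, hv]
    simp
  · right
    have h' : 2 * u + 1 = 0 := pow_eq_zero_iff (n := 2) (by norm_num) |>.mp h
    have hu : 2 * u = -1 := by linear_combination h'
    exact ⟨u, v, hu, by linear_combination 4*hkv + (2*u-1)*hu, hrep⟩

lemma mu3_mem (k : F) (w v : F) (h2 : (2:F) ≠ 0) (hw : 2*w = -1) (hv : 4*(k*v^2) = -3) :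
    ∃ x : (QuadAlg F k)ˣ, x ∈ mu3NormOne F k ∧
      (x : QuadAlg F k) = og k w + og k v * rt k := by
  set y := og k w + og k v * rt k with hy
  have c1 : w ^ 3 + 3 * k * w * v ^ 2 = 1 := by
    apply mul_left_cancel₀ (eight_ne h2)
    linear_combination 6*w*hv + (4*w^2-2*w-8)*hw
  have c2 : 3 * w ^ 2 * v + k * v ^ 3 = 0 := by
    apply mul_left_cancel₀ (eight_ne h2)
    linear_combination 2*v*hv + 6*v*(2*w-1)*hw
  have hcube : y ^ 3 = 1 := by
    rw [hy, cube_rep, c1, c2]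
    simp
  have hyy : y * y ^ 2 = 1 := by rw [← pow_succ']; exact hcube
  have hyy' : y ^ 2 * y = 1 := by rw [← pow_succ]; exact hcube
  refine ⟨⟨y, y ^ 2, hyy, hyy'⟩, ⟨?_, ?_⟩, rfl⟩
  · apply Units.ext
    rw [Units.val_pow_eq_pow_val]
    exact hcube
  · show Algebra.norm F y = 1
    rw [hy, norm_rep]
    apply mul_left_cancel₀ (four_ne h2)
    linear_combination -hv + (2*w-1)*hw

end Six
namespace Six
variable {F : Type*} [Field F]

def Mmat (a b c d t u : F) : Matrix (Fin 2) (Fin 2) F :=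
  !![t - (b*c - a*d)*u, -(2*((c^2 - b*d)*u)); 2*((b^2 - a*c)*u), t + (b*c - a*d)*u]

@[simp] lemma Mmat_00 (a b c d t u : F) : Mmat a b c d t u 0 0 = t - (b*c - a*d)*u := rfl
@[simp] lemma Mmat_01 (a b c d t u : F) : Mmat a b c d t u 0 1 = -(2*((c^2 - b*d)*u)) := rfl
@[simp] lemma Mmat_10 (a b c d t u : F) : Mmat a b c d t u 1 0 = 2*((b^2 - a*c)*u) := rfl
@[simp] lemma Mmat_11 (a b c d t u : F) : Mmat a b c d t u 1 1 = t + (b*c - a*d)*u := rfl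

lemma Mmat_fix (a b c d k t u : F) (h2 : (2:F) ≠ 0)
    (hD : (b*c-a*d)^2 - 4*((b^2-a*c)*(c^2-b*d)) = 4*k)
    (ht : 2*t = -1) (hu : 16*(k*u^2) = -3) :
    bcfAct (Mmat a b c d t u) (a,b,c,d) = (a,b,c,d) := by
  have h16 := sixteen_ne h2
  simp only [bcfAct, Mmat_00, Mmat_01, Mmat_10, Mmat_11, Prod.mk.injEq]
  refine ⟨?_, ?_, ?_, ?_⟩ <;> apply mul_left_cancel₀ h16
  · linear_combination (48*t*u^2*a + 16*u^3*(2*b^3-3*a*b*c+a^2*d))*hD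
      + (12*t*a + 4*u*(2*b^3-3*a*b*c+a^2*d))*hu
      + ((8*t^2-4*t-16)*a + 12*u*(2*t-1)*(2*b^3-3*a*b*c+a^2*d))*ht
  · linear_combination (48*t*u^2*b + 16*u^3*(b^2*c-2*a*c^2+a*b*d))*hD
      + (12*t*b + 4*u*(b^2*c-2*a*c^2+a*b*d))*hu
      + ((8*t^2-4*t-16)*b + 12*u*(2*t-1)*(b^2*c-2*a*c^2+a*b*d))*ht
  · linear_combination (48*t*u^2*c + 16*u^3*(-(b*c^2)+2*b^2*d-a*c*d))*hD
      + (12*t*c + 4*u*(-(b*c^2)+2*b^2*d-a*c*d))*hu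
      + ((8*t^2-4*t-16)*c + 12*u*(2*t-1)*(-(b*c^2)+2*b^2*d-a*c*d))*ht
  · linear_combination (48*t*u^2*d + 16*u^3*(-(2*c^3)+3*b*c*d-a*d^2))*hD
      + (12*t*d + 4*u*(-(2*c^3)+3*b*c*d-a*d^2))*hu
      + ((8*t^2-4*t-16)*d + 12*u*(2*t-1)*(-(2*c^3)+3*b*c*d-a*d^2))*ht

lemma Mmat_det (a b c d k t u : F) (h2 : (2:F) ≠ 0)
    (hD : (b*c-a*d)^2 - 4*((b^2-a*c)*(c^2-b*d)) = 4*k)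
    (ht : 2*t = -1) (hu : 16*(k*u^2) = -3) :
    (Mmat a b c d t u).det = 1 := by
  rw [Matrix.det_fin_two]
  simp only [Mmat_00, Mmat_01, Mmat_10, Mmat_11]
  apply mul_left_cancel₀ (four_ne h2)
  linear_combination (2*t-1)*ht - hu - 4*u^2*hD

end Six
namespace Six
variable {F : Type*} [Field F]

lemma Mmat_one (a b c d : F) : Mmat a b c d 1 0 = 1 := by
  simp [Mmat, Matrix.one_fin_two]

lemma stab_classify (a b c d k : F) (h2 : (2:F) ≠ 0) (hk : k ≠ 0)
    (hD : (b*c-a*d)^2 - 4*((b^2-a*c)*(c^2-b*d)) = 4*k)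
    (γ : Matrix (Fin 2) (Fin 2) F)
    (hdet : γ 0 0 * γ 1 1 - γ 0 1 * γ 1 0 = 1)
    (hfix : bcfAct γ (a,b,c,d) = (a,b,c,d)) :
    γ = 1 ∨ ∃ t u : F, 2*t = -1 ∧ 16*(k*u^2) = -3 ∧ γ = Mmat a b c d t u := by
  simp only [bcfAct, Prod.mk.injEq] at hfix
  set p := γ 0 0 with hp
  set q := γ 0 1 with hq
  set r := γ 1 0 with hr
  set s := γ 1 1 with hs
  obtain ⟨e0, e1, e2, e3⟩ := hfix
  have hQA : (b^2-a*c)*p^2 + (b*c-a*d)*(p*r) + (c^2-b*d)*r^2 = b^2-a*c := by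
    linear_combination
      ((a*p^2*q + b*(p^2*s+2*p*q*r) + c*(2*p*r*s+q*r^2) + d*(r^2*s)) + b)*e1
      - (a*(p*q^2) + b*(2*p*q*s+q^2*r) + c*(p*s^2+2*q*r*s) + d*(r*s^2))*e0 - a*e2
      - ((b^2-a*c)*p^2 + (b*c-a*d)*(p*r) + (c^2-b*d)*r^2)*((p*s-q*r)+1)*hdet
  have hQB : 2*((b^2-a*c)*(p*q)) + (b*c-a*d)*(p*s+q*r) + 2*((c^2-b*d)*(r*s)) = b*c-a*d := by
    linear_combination
      (a*(p*q^2) + b*(2*p*q*s+q^2*r) + c*(p*s^2+2*q*r*s) + d*(r*s^2))*e1 + b*e2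
      - (a*q^3 + 3*b*(q^2*s) + 3*c*(q*s^2) + d*s^3)*e0 - a*e3
      - (2*((b^2-a*c)*(p*q)) + (b*c-a*d)*(p*s+q*r) + 2*((c^2-b*d)*(r*s)))*((p*s-q*r)+1)*hdet
  have hQC : (b^2-a*c)*q^2 + (b*c-a*d)*(q*s) + (c^2-b*d)*s^2 = c^2-b*d := by
    linear_combination
      ((a*(p*q^2) + b*(2*p*q*s+q^2*r) + c*(p*s^2+2*q*r*s) + d*(r*s^2)) + c)*e2
      - (a*q^3 + 3*b*(q^2*s) + 3*c*(q*s^2) + d*s^3)*e1 - b*e3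
      - ((b^2-a*c)*q^2 + (b*c-a*d)*(q*s) + (c^2-b*d)*s^2)*((p*s-q*r)+1)*hdet
  have hbe : (b^2-a*c)*(p-s) + (b*c-a*d)*r = 0 := by
    apply mul_left_cancel₀ h2
    linear_combination 2*s*hQA - r*hQB
      - (2*(s*(b^2-a*c)) - r*(b*c-a*d) + 2*((b^2-a*c)*(p-s)+(b*c-a*d)*r))*hdet
  have hal : (b^2-a*c)*q + (c^2-b*d)*r = 0 := by
    apply mul_left_cancel₀ h2
    linear_combination -2*q*hQA + p*hQB
      + (2*(q*(b^2-a*c)) - p*(b*c-a*d) - 2*((b^2-a*c)*q+(c^2-b*d)*r))*hdet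
  have hde : (c^2-b*d)*(s-p) + (b*c-a*d)*q = 0 := by
    apply mul_left_cancel₀ h2
    linear_combination 2*p*hQC - q*hQB
      - (2*(p*(c^2-b*d)) - q*(b*c-a*d) + 2*((c^2-b*d)*(s-p)+(b*c-a*d)*q))*hdet
  have h2t : 2*((p+s)/2) = p + s := by
    rw [mul_comm, div_mul_cancel₀ _ h2]
  obtain ⟨t, u, hMp, hMq, hMr, hMs⟩ :
      ∃ t u : F, p = t - (b*c-a*d)*u ∧ q = -(2*((c^2-b*d)*u)) ∧ r = 2*((b^2-a*c)*u)
        ∧ s = t + (b*c-a*d)*u := by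
    by_cases hA : b^2-a*c = 0
    · by_cases hC : c^2-b*d = 0
      · -- Case A = 0, C = 0, B ≠ 0
        have hB2 : (b*c-a*d)^2 = 4*k := by
          linear_combination hD + 4*((c^2-b*d))*hA
        have hB : b*c-a*d ≠ 0 := by
          intro h0
          apply hk
          apply mul_left_cancel₀ (four_ne h2)
          rw [mul_zero, ← hB2, h0]
          ring
        have h2B : 2*(b*c-a*d) ≠ 0 := mul_ne_zero h2 hB
        have hBu : 2*((b*c-a*d)*((s-p)/(2*(b*c-a*d)))) = s - p := by
          rw [← mul_assoc, mul_div_cancel₀ _ h2B]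
        refine ⟨(p+s)/2, (s-p)/(2*(b*c-a*d)), ?_, ?_, ?_, ?_⟩
        · apply mul_left_cancel₀ h2B
          linear_combination -(b*c-a*d)*h2t + (b*c-a*d)*hBu
        · apply mul_left_cancel₀ hB
          linear_combination hde + (c^2-b*d)*hBu
        · apply mul_left_cancel₀ hB
          linear_combination hbe - (b^2-a*c)*hBu
        · apply mul_left_cancel₀ h2B
          linear_combination -(b*c-a*d)*h2t - (b*c-a*d)*hBu
      · -- Case A = 0, C ≠ 0
        have h2C : 2*(c^2-b*d) ≠ 0 := mul_ne_zero h2 hC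
        have hCu : 2*((c^2-b*d)*(-q/(2*(c^2-b*d)))) = -q := by
          rw [← mul_assoc, mul_div_cancel₀ _ h2C]
        refine ⟨(p+s)/2, -q/(2*(c^2-b*d)), ?_, ?_, ?_, ?_⟩
        · apply mul_left_cancel₀ h2C
          linear_combination -(c^2-b*d)*h2t - hde + (b*c-a*d)*hCu
        · linear_combination hCu
        · apply mul_left_cancel₀ hC
          linear_combination hal - (b^2-a*c)*hCu
        · apply mul_left_cancel₀ h2C
          linear_combination -(c^2-b*d)*h2t + hde - (b*c-a*d)*hCu
    · -- Case A ≠ 0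
      have h2A : 2*(b^2-a*c) ≠ 0 := mul_ne_zero h2 hA
      have hAu : 2*((b^2-a*c)*(r/(2*(b^2-a*c)))) = r := by
        rw [← mul_assoc, mul_div_cancel₀ _ h2A]
      refine ⟨(p+s)/2, r/(2*(b^2-a*c)), ?_, ?_, ?_, ?_⟩
      · apply mul_left_cancel₀ h2A
        linear_combination -(b^2-a*c)*h2t + (b*c-a*d)*hAu + hbe
      · apply mul_left_cancel₀ h2A
        linear_combination 2*((c^2-b*d))*hAu + 2*hal
      · linear_combination -hAu
      · apply mul_left_cancel₀ h2A
        linear_combination -(b^2-a*c)*h2t - (b*c-a*d)*hAu - hbe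
  have hγM : γ = Mmat a b c d t u := by
    rw [Matrix.eta_fin_two γ, ← hp, ← hq, ← hr, ← hs, hMp, hMq, hMr, hMs]
    rfl
  simp only [hMp, hMq, hMr, hMs] at hdet e0 e1 e2 e3
  have hN : t^2 - 4*(k*u^2) = 1 := by linear_combination hdet + u^2*hD
  have hprod : (6*t^2*u + 8*k*u^3)*(4*k) = 0 := by
    linear_combination d*e0 - 3*c*e1 + 3*b*e2 - a*e3
      - (6*t^2*u + 2*u^3*((b*c-a*d)^2 - 4*((b^2-a*c)*(c^2-b*d)) + 4*k))*hD
  have hu8 : 3*t^2*u + 4*k*u^3 = 0 := by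
    apply mul_left_cancel₀ (mul_ne_zero (eight_ne h2) hk)
    linear_combination hprod
  have hfa : (t^3 + 12*k*t*u^2 - 1)*a = 0 := by
    linear_combination e0 - (2*b^3 - 3*a*b*c + a^2*d)*hu8
      - (u^3*(2*b^3 - 3*a*b*c + a^2*d) + 3*t*u^2*a)*hD
  have hfb : (t^3 + 12*k*t*u^2 - 1)*b = 0 := by
    linear_combination e1 - (b^2*c - 2*a*c^2 + a*b*d)*hu8
      - (u^3*(b^2*c - 2*a*c^2 + a*b*d) + 3*t*u^2*b)*hD
  have ht1 : t^3 + 12*k*t*u^2 = 1 := by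
    apply mul_left_cancel₀ (mul_ne_zero (four_ne h2) hk)
    linear_combination (a*d^2 - 6*b*c*d + 4*c^3)*hfa + (-3*b*c^2 + 4*b^2*d)*hfb
      - (t^3 + 12*k*t*u^2 - 1)*hD
  have hcub : (t-1)*(2*t+1)^2 = 0 := by linear_combination ht1 + 3*t*hN
  rcases mul_eq_zero.mp hcub with ht' | ht'
  · left
    have ht'' : t = 1 := by linear_combination ht'
    have hku : k*u^2 = 0 := by
      apply mul_left_cancel₀ (four_ne h2)
      linear_combination -hN + (t+1)*ht'
    have hu0 : u = 0 := by
      rcases mul_eq_zero.mp hku with h' | h'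
      · exact absurd h' hk
      · exact pow_eq_zero_iff (n := 2) (by norm_num) |>.mp h'
    rw [hγM, ht'', hu0, Mmat_one]
  · right
    have h2t1 : 2*t = -1 := by
      have := pow_eq_zero_iff (n := 2) (by norm_num) |>.mp ht'
      linear_combination this
    have hu16 : 16*(k*u^2) = -3 := by linear_combination -4*hN + (2*t-1)*h2t1
    exact ⟨t, u, h2t1, hu16, hγM⟩

end Six
namespace Six
variable {F : Type*} [Field F]

def Mmat2 (a b c d Bh w v : F) : Matrix (Fin 2) (Fin 2) F :=
  !![w - Bh*v, -((c^2-b*d)*v); (b^2-a*c)*v, w + Bh*v]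

@[simp] lemma Mmat2_00 (a b c d Bh w v : F) : Mmat2 a b c d Bh w v 0 0 = w - Bh*v := rfl
@[simp] lemma Mmat2_01 (a b c d Bh w v : F) : Mmat2 a b c d Bh w v 0 1 = -((c^2-b*d)*v) := rfl
@[simp] lemma Mmat2_10 (a b c d Bh w v : F) : Mmat2 a b c d Bh w v 1 0 = (b^2-a*c)*v := rfl
@[simp] lemma Mmat2_11 (a b c d Bh w v : F) : Mmat2 a b c d Bh w v 1 1 = w + Bh*v := rfl

lemma Mmat2_eq_Mmat (a b c d Bh w u : F) (h2Bh : 2*Bh = b*c-a*d) :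
    Mmat2 a b c d Bh w (2*u) = Mmat a b c d w u := by
  ext i j
  fin_cases i <;> fin_cases j
  · show w - Bh*(2*u) = w - (b*c-a*d)*u
    linear_combination -u*h2Bh
  · show -((c^2-b*d)*(2*u)) = -(2*((c^2-b*d)*u))
    ring
  · show (b^2-a*c)*(2*u) = 2*((b^2-a*c)*u)
    ring
  · show w + Bh*(2*u) = w + (b*c-a*d)*u
    linear_combination u*h2Bh

lemma Mmat2_one (a b c d Bh : F) : Mmat2 a b c d Bh 1 0 = 1 := by
  simp [Mmat2, Matrix.one_fin_two]

lemma Mmat2_mul (a b c d k Bh w1 v1 w2 v2 : F) (h2 : (2:F) ≠ 0)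
    (hD : (b*c-a*d)^2 - 4*((b^2-a*c)*(c^2-b*d)) = 4*k)
    (h2Bh : 2*Bh = b*c-a*d) :
    Mmat2 a b c d Bh w1 v1 * Mmat2 a b c d Bh w2 v2
      = Mmat2 a b c d Bh (w1*w2 + k*(v1*v2)) (w1*v2 + v1*w2) := by
  ext i j
  rw [Matrix.mul_apply, Fin.sum_univ_two]
  fin_cases i <;> fin_cases j
  · show (w1 - Bh*v1)*(w2 - Bh*v2) + -((c^2-b*d)*v1) * ((b^2-a*c)*v2)
      = (w1*w2 + k*(v1*v2)) - Bh*(w1*v2 + v1*w2)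
    apply mul_left_cancel₀ (four_ne h2)
    linear_combination v1*v2*(2*Bh+(b*c-a*d))*h2Bh + v1*v2*hD
  · show (w1 - Bh*v1)*(-((c^2-b*d)*v2)) + -((c^2-b*d)*v1)*(w2 + Bh*v2)
      = -((c^2-b*d)*(w1*v2 + v1*w2))
    ring
  · show ((b^2-a*c)*v1)*(w2 - Bh*v2) + (w1 + Bh*v1)*((b^2-a*c)*v2)
      = (b^2-a*c)*(w1*v2 + v1*w2)
    ring
  · show ((b^2-a*c)*v1)*(-((c^2-b*d)*v2)) + (w1 + Bh*v1)*(w2 + Bh*v2)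
      = (w1*w2 + k*(v1*v2)) + Bh*(w1*v2 + v1*w2)
    apply mul_left_cancel₀ (four_ne h2)
    linear_combination v1*v2*(2*Bh+(b*c-a*d))*h2Bh + v1*v2*hD

lemma rep_mul (k w1 v1 w2 v2 : F) :
    (og k w1 + og k v1 * rt k) * (og k w2 + og k v2 * rt k)
      = og k (w1*w2 + k*(v1*v2)) + og k (w1*v2 + v1*w2) * rt k := by
  have hr := rt_sq k
  rw [_root_.map_add, _root_.map_add, _root_.map_mul, _root_.map_mul, _root_.map_mul,
    _root_.map_mul, _root_.map_mul]
  linear_combination (og k v1 * og k v2) * hr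

noncomputable def coord (k : F) (x : QuadAlg F k) : F × F :=
  ⟨Classical.choose (exists_rep k x),
   Classical.choose (Classical.choose_spec (exists_rep k x))⟩

lemma coord_spec (k : F) (x : QuadAlg F k) :
    x = og k (coord k x).1 + og k (coord k x).2 * rt k :=
  Classical.choose_spec (Classical.choose_spec (exists_rep k x))

lemma coord_val (k w v : F) : coord k (og k w + og k v * rt k) = (w, v) := by
  obtain ⟨h1, h2⟩ := rep_unique k _ _ _ _ (coord_spec k (og k w + og k v * rt k))
  rw [Prod.ext_iff]
  exact ⟨h1.symm, h2.symm⟩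

lemma coord_one (k : F) : coord k 1 = (1, 0) := by
  have : (1 : QuadAlg F k) = og k 1 + og k 0 * rt k := by simp
  rw [this, coord_val]

lemma coord_mul (k : F) (x y : QuadAlg F k) :
    coord k (x * y) = ((coord k x).1 * (coord k y).1 + k * ((coord k x).2 * (coord k y).2),
      (coord k x).1 * (coord k y).2 + (coord k x).2 * (coord k y).1) := by
  conv_lhs => rw [coord_spec k x, coord_spec k y, rep_mul, coord_val]

end Six
theorem stabilizer_iso_mu3_norm_one
    (h2 : (2 : F) ≠ 0) (h3 : (3 : F) ≠ 0) (hk : k ≠ 0)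
    (f : BCF F) (hf : bcfDisc f = 4 * k) :
    Nonempty (bcfStab F f ≃* mu3NormOne F k) := by
  obtain ⟨a, b, c, d⟩ := f
  simp only [bcfDisc] at hf
  have hD : (b*c-a*d)^2 - 4*((b^2-a*c)*(c^2-b*d)) = 4*k := by linear_combination hf
  set Bh := (b*c-a*d)/2 with hBh
  have h2Bh : 2*Bh = b*c-a*d := by rw [hBh, mul_comm, div_mul_cancel₀ _ h2]
  have key : ∀ x : (QuadAlg F k)ˣ, x ∈ mu3NormOne F k →
      (Six.Mmat2 a b c d Bh (Six.coord k (x : QuadAlg F k)).1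
        (Six.coord k (x : QuadAlg F k)).2).det = 1
      ∧ bcfAct (Six.Mmat2 a b c d Bh (Six.coord k (x : QuadAlg F k)).1
          (Six.coord k (x : QuadAlg F k)).2) (a,b,c,d) = (a,b,c,d) := by
    intro x hx
    rcases Six.mu3_class k hk h2 x hx with h1 | ⟨w, v, hw, hv, hrep⟩
    · rw [h1, Six.coord_one, Six.Mmat2_one]
      exact ⟨Matrix.det_one, bcfAct_one _⟩
    · rw [hrep, Six.coord_val]
      have hv2 : 2*(v/2) = v := by rw [mul_comm, div_mul_cancel₀ _ h2]
      have hMv : Six.Mmat2 a b c d Bh w v = Six.Mmat a b c d w (v/2) := by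
        rw [← Six.Mmat2_eq_Mmat a b c d Bh w (v/2) h2Bh, hv2]
      have h16 : 16*(k*(v/2)^2) = -3 := by
        linear_combination hv + 4*k*(2*(v/2)+v)*hv2
      rw [hMv]
      exact ⟨Six.Mmat_det a b c d k w (v/2) h2 hD hw h16,
        Six.Mmat_fix a b c d k w (v/2) h2 hD hw h16⟩
  let toFun : mu3NormOne F k → bcfStab F (a,b,c,d) := fun x =>
    ⟨⟨Six.Mmat2 a b c d Bh (Six.coord k ((x : (QuadAlg F k)ˣ) : QuadAlg F k)).1
        (Six.coord k ((x : (QuadAlg F k)ˣ) : QuadAlg F k)).2, (key x.1 x.2).1⟩, (key x.1 x.2).2⟩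
  have hmul : ∀ x y : mu3NormOne F k, toFun (x * y) = toFun x * toFun y := by
    intro x y
    apply Subtype.ext
    apply Subtype.ext
    show Six.Mmat2 a b c d Bh _ _ = Six.Mmat2 a b c d Bh _ _ * Six.Mmat2 a b c d Bh _ _
    have hco : ((((x * y : mu3NormOne F k) : (QuadAlg F k)ˣ)) : QuadAlg F k)
        = (((x : (QuadAlg F k)ˣ)) : QuadAlg F k) * (((y : (QuadAlg F k)ˣ)) : QuadAlg F k) := rfl
    rw [hco, Six.coord_mul]
    exact (Six.Mmat2_mul a b c d k Bh _ _ _ _ h2 hD h2Bh).symm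
  let ψ : mu3NormOne F k →* bcfStab F (a,b,c,d) := MonoidHom.mk' toFun hmul
  have hinj : Function.Injective ψ := by
    rw [injective_iff_map_eq_one]
    intro x hx1
    have hm : Six.Mmat2 a b c d Bh (Six.coord k ((x : (QuadAlg F k)ˣ) : QuadAlg F k)).1
        (Six.coord k ((x : (QuadAlg F k)ˣ) : QuadAlg F k)).2 = (1 : Matrix (Fin 2) (Fin 2) F) :=
      congrArg (fun g : bcfStab F (a,b,c,d) => g.val.val) hx1
    set w := (Six.coord k ((x : (QuadAlg F k)ˣ) : QuadAlg F k)).1 with hwdef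
    set v := (Six.coord k ((x : (QuadAlg F k)ˣ) : QuadAlg F k)).2 with hvdef
    have e00 : w - Bh*v = 1 := by
      have := congrFun (congrFun hm 0) 0
      simpa [Matrix.one_apply] using this
    have e11 : w + Bh*v = 1 := by
      have := congrFun (congrFun hm 1) 1
      simpa [Matrix.one_apply] using this
    have e10 : (b^2-a*c)*v = 0 := by
      have := congrFun (congrFun hm 1) 0
      simpa [Matrix.one_apply] using this
    have e01 : (c^2-b*d)*v = 0 := by
      have := congrFun (congrFun hm 0) 1
      simpa [Matrix.one_apply] using this
    have hv0 : v = 0 := by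
      by_contra hvne
      have hA : b^2-a*c = 0 := by
        rcases mul_eq_zero.mp e10 with h' | h'
        · exact h'
        · exact absurd h' hvne
      have hC : c^2-b*d = 0 := by
        rcases mul_eq_zero.mp e01 with h' | h'
        · exact h'
        · exact absurd h' hvne
      have hB : b*c-a*d = 0 := by
        have hBv : (b*c-a*d)*v = 0 := by
          rw [← h2Bh]
          linear_combination e11 - e00
        rcases mul_eq_zero.mp hBv with h' | h'
        · exact h'
        · exact absurd h' hvne
      apply absurd ?_ hk
      apply mul_left_cancel₀ (Six.four_ne h2)
      rw [mul_zero]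
      linear_combination -hD + ((b*c-a*d)+0)*hB - 4*(c^2-b*d)*hA
    have hw1 : w = 1 := by
      rw [hv0] at e00
      linear_combination e00
    apply Subtype.ext
    apply Units.ext
    have := Six.coord_spec k ((x : (QuadAlg F k)ˣ) : QuadAlg F k)
    rw [← hwdef, ← hvdef, hv0, hw1] at this
    simpa using this
  have hsurj : Function.Surjective ψ := by
    intro γ
    have hdetγ : ((γ : Matrix.SpecialLinearGroup (Fin 2) F) : Matrix (Fin 2) (Fin 2) F) 0 0 *
          ((γ : Matrix.SpecialLinearGroup (Fin 2) F) : Matrix (Fin 2) (Fin 2) F) 1 1 -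
          ((γ : Matrix.SpecialLinearGroup (Fin 2) F) : Matrix (Fin 2) (Fin 2) F) 0 1 *
          ((γ : Matrix.SpecialLinearGroup (Fin 2) F) : Matrix (Fin 2) (Fin 2) F) 1 0 = 1 := by
      have := (γ : Matrix.SpecialLinearGroup (Fin 2) F).prop
      rwa [Matrix.det_fin_two] at this
    have hfixγ : bcfAct ((γ : Matrix.SpecialLinearGroup (Fin 2) F) : Matrix (Fin 2) (Fin 2) F)
        (a,b,c,d) = (a,b,c,d) := γ.prop
    rcases Six.stab_classify a b c d k h2 hk hD _ hdetγ hfixγ with h1 | ⟨t, u, ht, hu, hM⟩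
    · refine ⟨1, ?_⟩
      apply Subtype.ext
      apply Subtype.ext
      show Six.Mmat2 a b c d Bh _ _ = _
      have hco : (((1 : mu3NormOne F k) : (QuadAlg F k)ˣ) : QuadAlg F k) = 1 := rfl
      rw [hco, Six.coord_one]
      exact (Six.Mmat2_one a b c d Bh).trans h1.symm
    · obtain ⟨x, hxmem, hxval⟩ := Six.mu3_mem k t (2*u) h2 ht (by linear_combination hu)
      refine ⟨⟨x, hxmem⟩, ?_⟩
      apply Subtype.ext
      apply Subtype.ext
      show Six.Mmat2 a b c d Bh _ _ = _
      rw [show (((⟨x, hxmem⟩ : mu3NormOne F k) : (QuadAlg F k)ˣ) : QuadAlg F k)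
          = (x : QuadAlg F k) from rfl, hxval, Six.coord_val,
        Six.Mmat2_eq_Mmat a b c d Bh t u h2Bh]
      exact hM.symm
  exact ⟨(MulEquiv.ofBijective ψ ⟨hinj, hsurj⟩).symm⟩

end
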